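/- There exists a positive integer d₀ such that for every d ≥ d₀ the following holds: for every 2-coloring c : (ℝ/ℤ)^d → Bool (i.e., c : (Fin d → ℝ/ℤ) → Bool), there exist a point x ∈ (ℝ/ℤ)^d and a nonzero common difference s ∈ (ℝ/ℤ)^d, each of whose coordinates is the image in ℝ/ℤ of 0 or of 1/3, such that the infinite arithmetic progression x, x+s, x+2s, … is monochromatic: c(x + n·s) = c(x) for every n ∈ ℕ. -/

import Mathlib

open Combinatorics Fin.NatCast

lemma int_coe_addcircle (k : ℤ) : (((k : ℝ)) : AddCircle (1 : ℝ)) = 0 := by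
  rw [AddCircle.coe_eq_zero_iff]
  exact ⟨k, by simp⟩

lemma addcircle_nat_mod3 (a b : ℕ) (h : a % 3 = b % 3) :
    (((a : ℝ) / 3 : ℝ) : AddCircle (1 : ℝ)) = (((b : ℝ) / 3 : ℝ) : AddCircle (1 : ℝ)) := by
  have hz : (3 * ((a : ℤ) / 3 - (b : ℤ) / 3) : ℤ) = (a : ℤ) - b := by omega
  have h3 : (((a : ℤ) / 3 - (b : ℤ) / 3 : ℤ) : ℝ) * 3 = (a : ℝ) - (b : ℝ) := by
    have := congrArg (fun z : ℤ => (z : ℝ)) hz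
    push_cast at this ⊢
    linarith
  have hr : (a : ℝ) / 3 = (b : ℝ) / 3 + (((a : ℤ) / 3 - (b : ℤ) / 3 : ℤ) : ℝ) := by
    linarith
  rw [hr, AddCircle.coe_add, int_coe_addcircle, add_zero]

/-- For all sufficiently large `d`, any 2-coloring of the torus `(ℝ/ℤ)^d` contains an
infinitely long monochromatic arithmetic progression whose nonzero common difference has
all coordinates equal to (the image of) `0` or `1/3`. -/
theorem torus_two_coloring_infinite_AP :
    ∃ d₀ : ℕ, 0 < d₀ ∧ ∀ d : ℕ, d₀ ≤ d →
      ∀ c : (Fin d → AddCircle (1 : ℝ)) → Bool,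
        ∃ x s : Fin d → AddCircle (1 : ℝ), s ≠ 0 ∧
          (∀ i : Fin d, s i = ((0 : ℝ) : AddCircle (1 : ℝ)) ∨
            s i = ((1 / 3 : ℝ) : AddCircle (1 : ℝ))) ∧
          ∀ n : ℕ, c (x + n • s) = c x := by
  obtain ⟨ι, _inst, hHJ⟩ := Line.exists_mono_in_high_dimension (Fin 3) Bool
  set m := Fintype.card ι with hm
  obtain ⟨e⟩ : Nonempty (ι ≃ Fin m) := ⟨Fintype.equivFin ι⟩
  refine ⟨max m 1, lt_of_lt_of_le one_pos (le_max_right _ _), fun d hd c => ?_⟩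
  have hmd : m ≤ d := le_trans (le_max_left _ _) hd
  -- natural-number coordinates of the line points, extended by 0
  -- define coloring of the cube
  set emb : (ι → Fin 3) → (Fin d → AddCircle (1 : ℝ)) := fun v i =>
    (((if h : (i : ℕ) < m then (v (e.symm ⟨i, h⟩) : ℕ) else 0 : ℕ) : ℝ) / 3 : ℝ) with hemb
  obtain ⟨l, b, hl⟩ := hHJ (fun v => c (emb v))
  obtain ⟨i₀, hi₀⟩ := l.proper
  -- the difference in ℕ coordinates
  set s₀ : Fin d → ℕ := fun i =>
    if h : (i : ℕ) < m then (if l.idxFun (e.symm ⟨i, h⟩) = none then 1 else 0) else 0 with hs₀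
  refine ⟨emb (l 0), fun i => (((s₀ i : ℝ) / 3 : ℝ) : AddCircle (1 : ℝ)), ?_, ?_, ?_⟩
  · intro hcontra
    have h0 : (((s₀ ⟨(e i₀ : ℕ), lt_of_lt_of_le (e i₀).isLt hmd⟩ : ℝ) / 3 : ℝ) :
        AddCircle (1 : ℝ)) = 0 := congrFun hcontra _
    have hs1 : s₀ ⟨(e i₀ : ℕ), lt_of_lt_of_le (e i₀).isLt hmd⟩ = 1 := by
      simp only [hs₀]
      rw [dif_pos (e i₀).isLt]
      have : e.symm ⟨(e i₀ : ℕ), (e i₀).isLt⟩ = i₀ := by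
        simpa using e.symm_apply_apply i₀
      rw [this, if_pos hi₀]
    rw [hs1] at h0
    rw [AddCircle.coe_eq_zero_iff] at h0
    obtain ⟨k, hk⟩ := h0
    have hk' : (k : ℝ) = 1 / 3 := by simpa using hk
    have h3' : ((3 * k : ℤ) : ℝ) = 1 := by push_cast; linarith
    have h3 : (3 * k : ℤ) = 1 := by exact_mod_cast h3'
    omega
  · intro i
    by_cases h : s₀ i = 0
    · left; simp only [h]; norm_num
    · right
      have h1 : s₀ i = 1 := by
        have : s₀ i = 0 ∨ s₀ i = 1 := by
          simp only [hs₀]; split_ifs <;> simp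
        tauto
      simp only [h1]; norm_num
  · intro n
    -- x + n • s = emb (l (n % 3))
    have key : emb (l 0) + n • (fun i => (((s₀ i : ℝ) / 3 : ℝ) : AddCircle (1 : ℝ)))
        = emb (l ((n % 3 : ℕ) : Fin 3)) := by
      funext i
      have hcoord : (emb (l 0) i) + (n : ℕ) • (((s₀ i : ℝ) / 3 : ℝ) : AddCircle (1 : ℝ))
          = emb (l ((n % 3 : ℕ) : Fin 3)) i := by
        simp only [hemb]
        by_cases h : (i : ℕ) < m
        · rw [dif_pos h, dif_pos h]
          cases hidx : l.idxFun (e.symm ⟨i, h⟩) with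
          | some a =>
            have hsz : s₀ i = 0 := by
              simp only [hs₀]; rw [dif_pos h, if_neg (by simp [hidx])]
            simp [Line.coe_apply, hidx, hsz]
          | none =>
            have hsz : s₀ i = 1 := by
              simp only [hs₀]; rw [dif_pos h, if_pos hidx]
            simp only [Line.coe_apply, hidx, Option.getD_none, hsz]
            have hval : (((n % 3 : ℕ) : Fin 3) : ℕ) = n % 3 := by
              simp [Fin.val_natCast]
            rw [hval]
            have : (((((0 : Fin 3) : ℕ) : ℝ) / 3 : ℝ) : AddCircle (1:ℝ))
                + (n : ℕ) • ((((1:ℕ) : ℝ) / 3 : ℝ) : AddCircle (1:ℝ))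
                = ((((n : ℕ) : ℝ) / 3 : ℝ) : AddCircle (1:ℝ)) := by
              rw [← AddCircle.coe_nsmul, ← AddCircle.coe_add]
              congr 1
              simp
              ring
            rw [this]
            exact addcircle_nat_mod3 n (n % 3) (by omega)
        · rw [dif_neg h, dif_neg h]
          have hsz : s₀ i = 0 := by simp only [hs₀]; rw [dif_neg h]
          rw [hsz]; simp
      simpa using hcoord
    rw [key]
    exact (hl ((n % 3 : ℕ) : Fin 3)).trans (hl 0).symm
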